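/- Let H be a finite-dimensional complex Hilbert space and let P₁, …, Pₙ be positive semidefinite operators on H with Σᵢ₌₁ⁿ Pᵢ = 1 (the identity). Let φ be a unit vector in H and ψ any vector in H, and set nᵢ = ⟨φ, Pᵢ φ⟩. Then |⟨φ, ψ⟩|² ≤ Σ_{i : nᵢ ≠ 0} |⟨φ, Pᵢ ψ⟩|² / nᵢ, where ⟨φ, Pᵢ ψ⟩ = ⟨√Pᵢ φ, √Pᵢ ψ⟩ and √Pᵢ denotes the positive semidefinite square root of Pᵢ. -/

import Mathlib

open scoped InnerProductSpace

/-- Degenerate Cauchy–Schwarz for a positive operator: if `⟪x, T x⟫ = 0` then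
`⟪x, T y⟫ = 0` for all `y`. -/
lemma inner_map_eq_zero_of_inner_self_eq_zero
    {H : Type*} [NormedAddCommGroup H] [InnerProductSpace ℂ H] [FiniteDimensional ℂ H]
    (T : H →L[ℂ] H) (hT : T.IsPositive) (x y : H)
    (hx : (⟪x, T x⟫_ℂ).re = 0) : ⟪x, T y⟫_ℂ = 0 := by
  set B : ℂ := ⟪x, T y⟫_ℂ with hB
  have hsym : ⟪y, T x⟫_ℂ = (starRingEnd ℂ) B := by
    rw [hB, ← inner_conj_symm, ← ContinuousLinearMap.adjoint_inner_left,
      hT.isSelfAdjoint.adjoint_eq]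
  have key : ∀ t : ℝ, 0 ≤ (⟪x + ((-(t:ℂ)) * (starRingEnd ℂ) B) • y,
      T (x + ((-(t:ℂ)) * (starRingEnd ℂ) B) • y)⟫_ℂ).re := fun t =>
    hT.re_inner_nonneg_right _
  have expand : ∀ t : ℝ, (⟪x + ((-(t:ℂ)) * (starRingEnd ℂ) B) • y,
      T (x + ((-(t:ℂ)) * (starRingEnd ℂ) B) • y)⟫_ℂ).re
      = -2 * t * Complex.normSq B + t ^ 2 * Complex.normSq B * (⟪y, T y⟫_ℂ).re := by
    intro t
    have : T (x + ((-(t:ℂ)) * (starRingEnd ℂ) B) • y)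
        = T x + ((-(t:ℂ)) * (starRingEnd ℂ) B) • T y := by
      simp [map_add, map_smul]
    rw [this]
    rw [inner_add_left, inner_add_right, inner_add_right, inner_smul_left,
      inner_smul_right, inner_smul_left, inner_smul_right, hsym, ← hB]
    have hre : ∀ z w : ℂ, (z + w).re = z.re + w.re := fun z w => Complex.add_re z w
    simp only [hre]
    have h1 : (((-(t:ℂ)) * (starRingEnd ℂ) B) * B).re = -t * Complex.normSq B := by
      rw [Complex.mul_re]
      simp [Complex.normSq_apply]
      ring
    have h2 : ((starRingEnd ℂ) ((-(t:ℂ)) * (starRingEnd ℂ) B) * (starRingEnd ℂ) B).re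
        = -t * Complex.normSq B := by
      rw [← map_mul, Complex.conj_re, Complex.mul_re]
      simp [Complex.normSq_apply]
      ring
    have h3 : ((starRingEnd ℂ) ((-(t:ℂ)) * (starRingEnd ℂ) B) *
        (((-(t:ℂ)) * (starRingEnd ℂ) B) * ⟪y, T y⟫_ℂ)).re
        = t ^ 2 * Complex.normSq B * (⟪y, T y⟫_ℂ).re := by
      have : (starRingEnd ℂ) ((-(t:ℂ)) * (starRingEnd ℂ) B) *
          ((-(t:ℂ)) * (starRingEnd ℂ) B) = ((t ^ 2 * Complex.normSq B : ℝ) : ℂ) := by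
        rw [Complex.ext_iff]
        constructor <;>
          simp [pow_two, Complex.mul_re, Complex.mul_im, Complex.normSq_apply] <;> ring
      rw [← mul_assoc, this, Complex.re_ofReal_mul]
    rw [hx, h1, h2, h3]
    ring
  have hC : 0 ≤ (⟪y, T y⟫_ℂ).re := hT.re_inner_nonneg_right y
  set C : ℝ := (⟪y, T y⟫_ℂ).re
  set K : ℝ := Complex.normSq B
  have hK : 0 ≤ K := Complex.normSq_nonneg B
  have hinst : 0 ≤ -2 * (1 / (C + 1)) * K + (1 / (C + 1)) ^ 2 * K * C := by
    rw [← expand (1 / (C + 1))]; exact key _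
  have hCpos : (0:ℝ) < C + 1 := by linarith
  have hKzero : K = 0 := by
    have e : (-2 * (1 / (C + 1)) * K + (1 / (C + 1)) ^ 2 * K * C) * (C + 1) ^ 2
        = -2 * K * (C + 1) + K * C := by
      field_simp
    have h4 : 0 ≤ -2 * K * (C + 1) + K * C := by
      rw [← e]; exact mul_nonneg hinst (sq_nonneg _)
    have h5 : 0 ≤ K * C := mul_nonneg hK hC
    linarith
  exact Complex.normSq_eq_zero.mp hKzero

/-- Key inequality in the proof of monotonicity: if `P₁, …, Pₙ` are positive semidefinite
operators on a finite-dimensional complex Hilbert space with `∑ i, Pᵢ = 1`, `φ` is a unit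
vector, `ψ` is any vector, and `nᵢ = ⟨φ, Pᵢ φ⟩`, then
`|⟨φ,ψ⟩|² ≤ ∑_{i : nᵢ ≠ 0} |⟨φ, Pᵢ ψ⟩|² / nᵢ`. -/
theorem abs_inner_sq_le_sum_div
    {H : Type*} [NormedAddCommGroup H] [InnerProductSpace ℂ H] [FiniteDimensional ℂ H]
    {n : ℕ} (P : Fin n → H →L[ℂ] H) (hpos : ∀ i, (P i).IsPositive)
    (hsum : ∑ i, P i = 1) (φ ψ : H) (hφ : ‖φ‖ = 1) :
    ‖⟪φ, ψ⟫_ℂ‖ ^ 2 ≤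
      ∑ i ∈ Finset.univ.filter (fun i => (⟪φ, (P i) φ⟫_ℂ).re ≠ 0),
        ‖⟪φ, (P i) ψ⟫_ℂ‖ ^ 2 / (⟪φ, (P i) φ⟫_ℂ).re := by
  classical
  set s := Finset.univ.filter (fun i => (⟪φ, (P i) φ⟫_ℂ).re ≠ 0) with hs
  -- the sum of all inner products equals ⟪φ, ψ⟫
  have htotal : ⟪φ, ψ⟫_ℂ = ∑ i, ⟪φ, (P i) ψ⟫_ℂ := by
    conv_lhs => rw [show ψ = (∑ i, P i) ψ by rw [hsum]; rfl]
    rw [ContinuousLinearMap.sum_apply, inner_sum]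
  -- terms outside s vanish
  have hzero : ∀ i ∉ s, ⟪φ, (P i) ψ⟫_ℂ = 0 := by
    intro i hi
    rw [hs, Finset.mem_filter] at hi
    push_neg at hi
    have hx : (⟪φ, (P i) φ⟫_ℂ).re = 0 := hi (Finset.mem_univ i)
    exact inner_map_eq_zero_of_inner_self_eq_zero (P i) (hpos i) φ ψ hx
  have hsplit : ⟪φ, ψ⟫_ℂ = ∑ i ∈ s, ⟪φ, (P i) ψ⟫_ℂ := by
    rw [htotal, ← Finset.sum_filter_add_sum_filter_not Finset.univ
      (fun i => (⟪φ, (P i) φ⟫_ℂ).re ≠ 0)]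
    rw [← hs]
    have : ∑ i ∈ Finset.univ.filter (fun i => ¬ (⟪φ, (P i) φ⟫_ℂ).re ≠ 0),
        ⟪φ, (P i) ψ⟫_ℂ = 0 := by
      apply Finset.sum_eq_zero
      intro i hi
      apply hzero
      rw [hs]
      rw [Finset.mem_filter] at hi ⊢
      tauto
    rw [this, add_zero]
  -- nonnegativity of nᵢ, and positivity on s
  have hn_pos : ∀ i ∈ s, 0 < (⟪φ, (P i) φ⟫_ℂ).re := by
    intro i hi
    rw [hs, Finset.mem_filter] at hi
    exact lt_of_le_of_ne ((hpos i).re_inner_nonneg_right φ) (Ne.symm hi.2)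
  -- total sum of nᵢ equals 1
  have hntotal : ∑ i, (⟪φ, (P i) φ⟫_ℂ).re = 1 := by
    have h1 : (∑ i, P i) φ = φ := by rw [hsum]; rfl
    have h2 : ∑ i, (⟪φ, (P i) φ⟫_ℂ) = ⟪φ, φ⟫_ℂ := by
      rw [← inner_sum, ← ContinuousLinearMap.sum_apply, h1]
    calc ∑ i, (⟪φ, (P i) φ⟫_ℂ).re = (∑ i, ⟪φ, (P i) φ⟫_ℂ).re := by
          rw [Complex.re_sum]
      _ = (⟪φ, φ⟫_ℂ).re := by rw [h2]
      _ = 1 := by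
          rw [inner_self_eq_norm_sq_to_K (𝕜 := ℂ) φ, hφ]
          norm_num
  have hnsum_le : ∑ i ∈ s, (⟪φ, (P i) φ⟫_ℂ).re ≤ 1 := by
    rw [← hntotal]
    apply Finset.sum_le_sum_of_subset_of_nonneg (Finset.filter_subset _ _)
    intro i _ _
    exact (hpos i).re_inner_nonneg_right φ
  -- reduce to real Cauchy–Schwarz
  have hstep1 : ‖⟪φ, ψ⟫_ℂ‖ ≤ ∑ i ∈ s, ‖⟪φ, (P i) ψ⟫_ℂ‖ := by
    rw [hsplit]
    exact norm_sum_le _ _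
  rcases s.eq_empty_or_nonempty with he | hne
  · rw [he] at hsplit ⊢
    simp only [Finset.sum_empty] at hsplit ⊢
    rw [hsplit]
    simp
  · have hnsum_pos : 0 < ∑ i ∈ s, (⟪φ, (P i) φ⟫_ℂ).re :=
      Finset.sum_pos hn_pos hne
    have hsed := Finset.sq_sum_div_le_sum_sq_div s (fun i => ‖⟪φ, (P i) ψ⟫_ℂ‖) hn_pos
    calc ‖⟪φ, ψ⟫_ℂ‖ ^ 2 ≤ (∑ i ∈ s, ‖⟪φ, (P i) ψ⟫_ℂ‖) ^ 2 := by
          apply pow_le_pow_left₀ (norm_nonneg _) hstep1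
      _ ≤ (∑ i ∈ s, ‖⟪φ, (P i) ψ⟫_ℂ‖) ^ 2 / ∑ i ∈ s, (⟪φ, (P i) φ⟫_ℂ).re := by
          rw [le_div_iff₀ hnsum_pos]
          exact mul_le_of_le_one_right (sq_nonneg _) hnsum_le
      _ ≤ ∑ i ∈ s, ‖⟪φ, (P i) ψ⟫_ℂ‖ ^ 2 / (⟪φ, (P i) φ⟫_ℂ).re := hsed
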